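/- Let f : ℝ → ℝ be three times differentiable on an open interval containing [0,1], with f''(x) ≥ 0 and f'''(x) ≤ 0 for all x ∈ [0,1]. Then for all a, b ∈ [0,1]: f(b) ≥ f(a) + f'(a)·(b − a) + (f''(a)/2)·(max(a − b, 0))². -/

import Mathlib

theorem stmt_12 (f : ℝ → ℝ) (u v : ℝ) (hu : u < 0) (hv : 1 < v)
    (hf1 : ∀ x ∈ Set.Ioo u v, DifferentiableAt ℝ f x)
    (hf2 : ∀ x ∈ Set.Ioo u v, DifferentiableAt ℝ (deriv f) x)
    (hf3 : ∀ x ∈ Set.Ioo u v, DifferentiableAt ℝ (deriv (deriv f)) x)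
    (hf'' : ∀ x ∈ Set.Icc (0 : ℝ) 1, 0 ≤ deriv (deriv f) x)
    (hf''' : ∀ x ∈ Set.Icc (0 : ℝ) 1, deriv (deriv (deriv f)) x ≤ 0) :
    ∀ a ∈ Set.Icc (0 : ℝ) 1, ∀ b ∈ Set.Icc (0 : ℝ) 1,
      f b ≥ f a + deriv f a * (b - a) + (deriv (deriv f) a / 2) * (max (a - b) 0) ^ 2 := by
  intro a ha b hb
  have hsub : Set.Icc (0:ℝ) 1 ⊆ Set.Ioo u v := fun x hx =>
    ⟨lt_of_lt_of_le hu hx.1, lt_of_le_of_lt hx.2 hv⟩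
  rcases le_or_gt a b with hab | hab
  · -- case a ≤ b : max = 0
    have hmax : max (a - b) 0 = 0 := max_eq_right (by linarith)
    rw [hmax]
    have hIab : Set.Icc a b ⊆ Set.Icc (0:ℝ) 1 := Set.Icc_subset_Icc ha.1 hb.2
    -- deriv f is monotone on [a,b]
    have hmono : MonotoneOn (deriv f) (Set.Icc a b) := by
      apply monotoneOn_of_deriv_nonneg (convex_Icc a b)
      · exact fun x hx => ((hf2 x (hsub (hIab hx))).continuousAt).continuousWithinAt
      · intro x hx
        rw [interior_Icc] at hx
        exact (hf2 x (hsub (hIab (Set.Ioo_subset_Icc_self hx)))).differentiableWithinAt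
      · intro x hx
        rw [interior_Icc] at hx
        exact hf'' x (hIab (Set.Ioo_subset_Icc_self hx))
    set g : ℝ → ℝ := fun x => f x - f a - deriv f a * (x - a) with hg
    have hgmono : MonotoneOn g (Set.Icc a b) := by
      apply monotoneOn_of_deriv_nonneg (convex_Icc a b)
      · intro x hx
        exact ((((hf1 x (hsub (hIab hx))).continuousAt).sub continuousAt_const).sub
          (continuousAt_const.mul (continuousAt_id.sub continuousAt_const))).continuousWithinAt
      · intro x hx
        rw [interior_Icc] at hx
        exact (((hf1 x (hsub (hIab (Set.Ioo_subset_Icc_self hx)))).sub_const _).sub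
          ((differentiableAt_id.sub_const a).const_mul _)).differentiableWithinAt
      · intro x hx
        rw [interior_Icc] at hx
        have hx' := hIab (Set.Ioo_subset_Icc_self hx)
        have H : HasDerivAt g (deriv f x - deriv f a) x := by
          have h1 := (hf1 x (hsub hx')).hasDerivAt
          have h2 : HasDerivAt (fun x => deriv f a * (x - a)) (deriv f a) x := by
            simpa using ((hasDerivAt_id x).sub_const a).const_mul (deriv f a)
          exact (h1.sub_const (f a)).sub h2
        rw [H.deriv]
        have := hmono (Set.left_mem_Icc.2 hab) (Set.Ioo_subset_Icc_self hx) hx.1.le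
        linarith
    have := hgmono (Set.left_mem_Icc.2 hab) (Set.right_mem_Icc.2 hab) hab
    simp only [hg] at this
    nlinarith [this]
  · -- case b < a
    have hmax : max (a - b) 0 = a - b := max_eq_left (by linarith)
    rw [hmax]
    have hIba : Set.Icc b a ⊆ Set.Icc (0:ℝ) 1 := Set.Icc_subset_Icc hb.1 ha.2
    set c := deriv (deriv f) a with hc
    -- f'' is antitone on [0,1]
    have hanti : AntitoneOn (deriv (deriv f)) (Set.Icc (0:ℝ) 1) := by
      apply antitoneOn_of_deriv_nonpos (convex_Icc 0 1)
      · exact fun x hx => ((hf3 x (hsub hx)).continuousAt).continuousWithinAt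
      · intro x hx
        rw [interior_Icc] at hx
        exact (hf3 x (hsub (Set.Ioo_subset_Icc_self hx))).differentiableWithinAt
      · intro x hx
        rw [interior_Icc] at hx
        exact hf''' x (Set.Ioo_subset_Icc_self hx)
    -- h x = deriv f x - deriv f a - c*(x-a) is monotone on [b,a]
    set h : ℝ → ℝ := fun x => deriv f x - deriv f a - c * (x - a) with hh
    have hmono : MonotoneOn h (Set.Icc b a) := by
      apply monotoneOn_of_deriv_nonneg (convex_Icc b a)
      · intro x hx
        exact ((((hf2 x (hsub (hIba hx))).continuousAt).sub continuousAt_const).sub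
          (continuousAt_const.mul (continuousAt_id.sub continuousAt_const))).continuousWithinAt
      · intro x hx
        rw [interior_Icc] at hx
        exact (((hf2 x (hsub (hIba (Set.Ioo_subset_Icc_self hx)))).sub_const _).sub
          ((differentiableAt_id.sub_const a).const_mul _)).differentiableWithinAt
      · intro x hx
        rw [interior_Icc] at hx
        have hx' := hIba (Set.Ioo_subset_Icc_self hx)
        have H : HasDerivAt h (deriv (deriv f) x - c) x := by
          have h1 := (hf2 x (hsub hx')).hasDerivAt
          have h2 : HasDerivAt (fun x => c * (x - a)) c x := by
            simpa using ((hasDerivAt_id x).sub_const a).const_mul c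
          exact (h1.sub_const (deriv f a)).sub h2
        rw [H.deriv]
        have := hanti hx' ha hx.2.le
        linarith
    -- g x = f x - f a - deriv f a*(x-a) - c/2*(x-a)^2 is antitone on [b,a]
    set g : ℝ → ℝ := fun x => f x - f a - deriv f a * (x - a) - c / 2 * (x - a) ^ 2 with hg
    have hganti : AntitoneOn g (Set.Icc b a) := by
      apply antitoneOn_of_deriv_nonpos (convex_Icc b a)
      · intro x hx
        exact (((((hf1 x (hsub (hIba hx))).continuousAt).sub continuousAt_const).sub
          (continuousAt_const.mul (continuousAt_id.sub continuousAt_const))).sub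
          (continuousAt_const.mul ((continuousAt_id.sub continuousAt_const).pow 2))).continuousWithinAt
      · intro x hx
        rw [interior_Icc] at hx
        exact ((((hf1 x (hsub (hIba (Set.Ioo_subset_Icc_self hx)))).sub_const _).sub
          ((differentiableAt_id.sub_const a).const_mul _)).sub
          (((differentiableAt_id.sub_const a).pow 2).const_mul _)).differentiableWithinAt
      · intro x hx
        rw [interior_Icc] at hx
        have hx' := hIba (Set.Ioo_subset_Icc_self hx)
        have H : HasDerivAt g (h x) x := by
          have h1 := (hf1 x (hsub hx')).hasDerivAt
          have h2 : HasDerivAt (fun x => deriv f a * (x - a)) (deriv f a) x := by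
            simpa using ((hasDerivAt_id x).sub_const a).const_mul (deriv f a)
          have h3 : HasDerivAt (fun x => c / 2 * (x - a) ^ 2) (c * (x - a)) x := by
            have := (((hasDerivAt_id x).sub_const a).pow 2).const_mul (c / 2)
            refine this.congr_deriv ?_
            norm_num
            ring
          have := ((h1.sub_const (f a)).sub h2).sub h3
          exact this
        rw [H.deriv]
        have ha0 : h a = 0 := by simp [hh]
        have h0 := hmono (Set.Ioo_subset_Icc_self hx) (Set.right_mem_Icc.2 (le_of_lt hab)) hx.2.le
        linarith
    have := hganti (Set.left_mem_Icc.2 (le_of_lt hab)) (Set.right_mem_Icc.2 (le_of_lt hab)) (le_of_lt hab)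
    simp only [hg] at this
    nlinarith [this]
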